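/- (Monotonicity of the Fisher information under stochastic maps.) Let 𝒳, 𝒴 be finite nonempty sets and W: 𝒴 × 𝒳 → ℝ a left-stochastic transition matrix (W(y|x) ≥ 0, Σ_{y∈𝒴} W(y|x) = 1 for every x), such that for every y ∈ 𝒴 there is some x with W(y|x) > 0. Let P(·|γ) be a differentiable family of probability distributions on 𝒳 and define the pushed-forward family P'(y|γ) = Σ_{x∈𝒳} W(y|x) P(x|γ) on 𝒴. Then the Fisher information of the pushed-forward family is bounded by that of the original family: F_{P'}(γ) ≤ F_P(γ) for every γ. -/

import Mathlib

open Finset Real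

/-- monotonicity of the Fisher information under stochastic maps. -/
theorem stmt11 {X Y : Type*} [Fintype X] [Fintype Y] [Nonempty X] [Nonempty Y]
    (I : Set ℝ) (hIopen : IsOpen I) (hIconn : I.OrdConnected)
    (P : ℝ → X → ℝ)
    (hpos : ∀ γ ∈ I, ∀ x : X, 0 < P γ x)
    (hsum : ∀ γ ∈ I, ∑ x : X, P γ x = 1)
    (hdiff : ∀ x : X, ∀ γ ∈ I, DifferentiableAt ℝ (fun t => P t x) γ)
    (W : Y → X → ℝ)
    (hW0 : ∀ y x, 0 ≤ W y x) (hW1 : ∀ x, ∑ y : Y, W y x = 1)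
    (hWpos : ∀ y : Y, ∃ x : X, 0 < W y x)
    (γ : ℝ) (hγ : γ ∈ I) :
    ∑ y : Y, (deriv (fun t => ∑ x : X, W y x * P t x) γ) ^ 2 / (∑ x : X, W y x * P γ x)
      ≤ ∑ x : X, (deriv (fun t => P t x) γ) ^ 2 / P γ x := by
  set d : X → ℝ := fun x => deriv (fun t => P t x) γ with hd
  have hPpos : ∀ x, 0 < P γ x := hpos γ hγ
  have hderiv : ∀ y : Y, deriv (fun t => ∑ x : X, W y x * P t x) γ = ∑ x : X, W y x * d x := by
    intro y
    have : (fun t => ∑ x : X, W y x * P t x) = fun t => ∑ x : X, W y x * P t x := rfl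
    rw [deriv_fun_sum (fun x _ => ((hdiff x γ hγ).const_mul (W y x)))]
    refine Finset.sum_congr rfl fun x _ => ?_
    exact deriv_const_mul (W y x) (hdiff x γ hγ)
  have hP'pos : ∀ y : Y, 0 < ∑ x : X, W y x * P γ x := by
    intro y
    obtain ⟨x0, hx0⟩ := hWpos y
    exact Finset.sum_pos' (fun x _ => mul_nonneg (hW0 y x) (hPpos x).le)
      ⟨x0, Finset.mem_univ x0, mul_pos hx0 (hPpos x0)⟩
  have key : ∀ y : Y,
      (∑ x : X, W y x * d x) ^ 2 / (∑ x : X, W y x * P γ x)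
        ≤ ∑ x : X, W y x * (d x ^ 2 / P γ x) := by
    intro y
    rw [div_le_iff₀ (hP'pos y)]
    have h1 : ∀ x : X, Real.sqrt (W y x * P γ x) *
        (Real.sqrt (W y x) * d x / Real.sqrt (P γ x)) = W y x * d x := by
      intro x
      rw [Real.sqrt_mul (hW0 y x)]
      have hs : Real.sqrt (P γ x) ≠ 0 := (Real.sqrt_pos.mpr (hPpos x)).ne'
      field_simp
      linear_combination (d x) * Real.mul_self_sqrt (hW0 y x)
    -- use sum_mul_sq_le_sq_mul_sq
    have cs2 := Finset.sum_mul_sq_le_sq_mul_sq Finset.univ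
      (fun x => Real.sqrt (W y x * P γ x))
      (fun x => Real.sqrt (W y x) * d x / Real.sqrt (P γ x))
    simp only [h1] at cs2
    have h2 : ∑ x : X, Real.sqrt (W y x * P γ x) ^ 2 = ∑ x : X, W y x * P γ x := by
      refine Finset.sum_congr rfl fun x _ => ?_
      exact Real.sq_sqrt (mul_nonneg (hW0 y x) (hPpos x).le)
    have h3 : ∑ x : X, (Real.sqrt (W y x) * d x / Real.sqrt (P γ x)) ^ 2
        = ∑ x : X, W y x * (d x ^ 2 / P γ x) := by
      refine Finset.sum_congr rfl fun x _ => ?_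
      rw [div_pow, mul_pow, Real.sq_sqrt (hW0 y x), Real.sq_sqrt (hPpos x).le]
      ring
    rw [h2, h3] at cs2
    calc (∑ x : X, W y x * d x) ^ 2
        ≤ (∑ x : X, W y x * P γ x) * ∑ x : X, W y x * (d x ^ 2 / P γ x) := cs2
      _ = (∑ x : X, W y x * (d x ^ 2 / P γ x)) * ∑ x : X, W y x * P γ x := mul_comm _ _
  calc ∑ y : Y, (deriv (fun t => ∑ x : X, W y x * P t x) γ) ^ 2 / (∑ x : X, W y x * P γ x)
      = ∑ y : Y, (∑ x : X, W y x * d x) ^ 2 / (∑ x : X, W y x * P γ x) := by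
        refine Finset.sum_congr rfl fun y _ => ?_; rw [hderiv y]
    _ ≤ ∑ y : Y, ∑ x : X, W y x * (d x ^ 2 / P γ x) :=
        Finset.sum_le_sum fun y _ => key y
    _ = ∑ x : X, (∑ y : Y, W y x) * (d x ^ 2 / P γ x) := by
        rw [Finset.sum_comm]
        exact Finset.sum_congr rfl fun x _ => (Finset.sum_mul _ _ _).symm
    _ = ∑ x : X, d x ^ 2 / P γ x := by
        refine Finset.sum_congr rfl fun x _ => ?_
        rw [hW1 x, one_mul]
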